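/- Let P* be a probability measure on (Ω,𝓕) and let ∅ ≠ 𝒞 be a solid subset of the positive cone L⁰_{P*,+} of L⁰_{P*} (solid: X∈𝒞 and 0 ⪯ Y ⪯ X imply Y∈𝒞). Then 𝒞 is closed with respect to convergence in probability under P* if and only if 𝒞 is order closed. -/

import Mathlib

open MeasureTheory Set Filter

namespace Robust

universe u

variable {Ω : Type*} [MeasurableSpace Ω]

/-- `N` is a `𝔓`-polar event: every measure in `𝔓` assigns it measure zero. -/
def Polar (𝔓 : Set (Measure Ω)) (N : Set Ω) : Prop := ∀ P ∈ 𝔓, P N = 0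

/-- `f ≤ g` holds `𝔓`-quasi surely. -/
def QSLe (𝔓 : Set (Measure Ω)) (f g : Ω → ℝ) : Prop := Polar 𝔓 {ω | ¬ f ω ≤ g ω}

/-- `f = g` holds `𝔓`-quasi surely; this is the equivalence relation defining `L⁰_𝐜`. -/
def QSEq (𝔓 : Set (Measure Ω)) (f g : Ω → ℝ) : Prop := QSLe 𝔓 f g ∧ QSLe 𝔓 g f

/-- A representative of an element of `L^∞_𝐜`: a measurable, `𝔓`-q.s. bounded function. -/
def MemLinf (𝔓 : Set (Measure Ω)) (f : Ω → ℝ) : Prop :=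
  Measurable f ∧ ∃ m : ℝ, QSLe 𝔓 (fun ω => |f ω|) fun _ => m

/-- The `L^∞_𝐜` norm of (the class of) `f`. -/
noncomputable def linfNorm (𝔓 : Set (Measure Ω)) (f : Ω → ℝ) : ℝ :=
  sInf {m : ℝ | 0 ≤ m ∧ QSLe 𝔓 (fun ω => |f ω|) fun _ => m}

/-- `g` is a `𝔓`-q.s. upper bound of the set of functions `S`. -/
def IsQSUB (𝔓 : Set (Measure Ω)) (S : Set (Ω → ℝ)) (g : Ω → ℝ) : Prop := ∀ f ∈ S, QSLe 𝔓 f g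

/-- `g` is a `𝔓`-q.s. lower bound of the set of functions `S`. -/
def IsQSLB (𝔓 : Set (Measure Ω)) (S : Set (Ω → ℝ)) (g : Ω → ℝ) : Prop := ∀ f ∈ S, QSLe 𝔓 g f

/-- `g` is a supremum of `S` in `L⁰_𝐜` (least upper bound for the q.s. order). -/
def IsQSSup (𝔓 : Set (Measure Ω)) (S : Set (Ω → ℝ)) (g : Ω → ℝ) : Prop :=
  IsQSUB 𝔓 S g ∧ ∀ h : Ω → ℝ, Measurable h → IsQSUB 𝔓 S h → QSLe 𝔓 g h

/-- `g` is an infimum of `S` in `L⁰_𝐜` (greatest lower bound for the q.s. order). -/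
def IsQSInf (𝔓 : Set (Measure Ω)) (S : Set (Ω → ℝ)) (g : Ω → ℝ) : Prop :=
  IsQSLB 𝔓 S g ∧ ∀ h : Ω → ℝ, Measurable h → IsQSLB 𝔓 S h → QSLe 𝔓 h g

/-- `S` is an order support of the measure `μ` relative to `𝔓`. -/
def IsOrderSupport (𝔓 : Set (Measure Ω)) (μ : Measure Ω) (S : Set Ω) : Prop :=
  MeasurableSet S ∧ μ Sᶜ = 0 ∧
    ∀ N : Set Ω, MeasurableSet N → μ (N ∩ S) = 0 → Polar 𝔓 (N ∩ S)

/-- The measure `μ` is supported (relative to the polar events of `𝔓`). -/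
def Supported (𝔓 : Set (Measure Ω)) (μ : Measure Ω) : Prop := ∃ S, IsOrderSupport 𝔓 μ S

/-- Two sets of measures are equivalent: they have the same polar events. -/
def PolarEquiv (𝔓 𝔔 : Set (Measure Ω)) : Prop :=
  ∀ N : Set Ω, MeasurableSet N → (Polar 𝔓 N ↔ Polar 𝔔 N)

/-- `𝔔` is a supported alternative to `𝔓`. -/
def IsSuppAlt (𝔓 𝔔 : Set (Measure Ω)) : Prop :=
  𝔔.Nonempty ∧ (∀ Q ∈ 𝔔, IsProbabilityMeasure Q) ∧ PolarEquiv 𝔓 𝔔 ∧ ∀ Q ∈ 𝔔, Supported 𝔓 Q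

/-- `𝔓` is of class (S). -/
def ClassS (𝔓 : Set (Measure Ω)) : Prop := ∃ 𝔔 : Set (Measure Ω), IsSuppAlt 𝔓 𝔔

/-- The total variation norm of a signed measure. -/
noncomputable def tv (μ : SignedMeasure Ω) : ℝ := (μ.totalVariation Set.univ).toReal

/-- `ca_𝐜`: signed measures whose total variation vanishes on `𝔓`-polar events. -/
def caC (𝔓 : Set (Measure Ω)) : Set (SignedMeasure Ω) :=
  {μ | ∀ N : Set Ω, MeasurableSet N → Polar 𝔓 N → μ.totalVariation N = 0}

/-- `sca_𝐜`: members of `ca_𝐜` whose total variation is supported. -/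
def scaC (𝔓 : Set (Measure Ω)) : Set (SignedMeasure Ω) :=
  {μ | μ ∈ caC 𝔓 ∧ Supported 𝔓 μ.totalVariation}

/-- Integral of `f` against a signed measure, via the Jordan decomposition. -/
noncomputable def integSM (f : Ω → ℝ) (μ : SignedMeasure Ω) : ℝ :=
  ∫ ω, f ω ∂μ.toJordanDecomposition.posPart - ∫ ω, f ω ∂μ.toJordanDecomposition.negPart

/-- `ca_{𝐜,+}`: finite (nonnegative) measures vanishing on `𝔓`-polar events. -/
def caCpos (𝔓 : Set (Measure Ω)) : Set (Measure Ω) :=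
  {μ | IsFiniteMeasure μ ∧ ∀ N : Set Ω, MeasurableSet N → Polar 𝔓 N → μ N = 0}

/-- Order convergence in `L⁰_𝐜` of a net `X` to `x`: there is an antitone net of measurable
functions with q.s. infimum `0` dominating `|X α - x|`. -/
def OrderConvTo (𝔓 : Set (Measure Ω)) {ι : Type u} [Preorder ι]
    (X : ι → Ω → ℝ) (x : Ω → ℝ) : Prop :=
  ∃ Y : ι → Ω → ℝ, (∀ α, Measurable (Y α)) ∧
    (∀ α β, α ≤ β → QSLe 𝔓 (Y β) (Y α)) ∧
    IsQSInf 𝔓 (Set.range Y) (fun _ => 0) ∧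
    ∀ α, QSLe 𝔓 (fun ω => |X α ω - x ω|) (Y α)

/-- Order convergence in `L^∞_𝐜` of a net `X` to `x`: the dominating net lies in `L^∞_𝐜`. -/
def OrderConvToLinf (𝔓 : Set (Measure Ω)) {ι : Type u} [Preorder ι]
    (X : ι → Ω → ℝ) (x : Ω → ℝ) : Prop :=
  ∃ Y : ι → Ω → ℝ, (∀ α, MemLinf 𝔓 (Y α)) ∧
    (∀ α β, α ≤ β → QSLe 𝔓 (Y β) (Y α)) ∧
    IsQSInf 𝔓 (Set.range Y) (fun _ => 0) ∧
    ∀ α, QSLe 𝔓 (fun ω => |X α ω - x ω|) (Y α)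

/-- A set of (classes of) functions in `L⁰_𝐜` is order closed: it contains (a representative of)
the order limit of every order convergent net of its elements. -/
def OrderClosedL0 (𝔓 : Set (Measure Ω)) (𝒞 : Set (Ω → ℝ)) : Prop :=
  ∀ (ι : Type u) [Preorder ι] [IsDirected ι (· ≤ ·)] [Nonempty ι],
    ∀ (X : ι → Ω → ℝ) (x : Ω → ℝ), (∀ α, X α ∈ 𝒞) → Measurable x →
      OrderConvTo 𝔓 X x → ∃ x' ∈ 𝒞, QSEq 𝔓 x x'

/-- A subset of `L^∞_𝐜` is order closed. -/
def OrderClosedLinf (𝔓 : Set (Measure Ω)) (𝒞 : Set (Ω → ℝ)) : Prop :=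
  ∀ (ι : Type u) [Preorder ι] [IsDirected ι (· ≤ ·)] [Nonempty ι],
    ∀ (X : ι → Ω → ℝ) (x : Ω → ℝ), (∀ α, X α ∈ 𝒞) → MemLinf 𝔓 x →
      OrderConvToLinf 𝔓 X x → ∃ x' ∈ 𝒞, QSEq 𝔓 x x'

/-- `L^∞_𝐜` is Dedekind complete: every nonempty subset bounded above has a supremum. -/
def LinfDedekind (𝔓 : Set (Measure Ω)) : Prop :=
  ∀ S : Set (Ω → ℝ), S.Nonempty → (∀ f ∈ S, MemLinf 𝔓 f) →
    (∃ h, MemLinf 𝔓 h ∧ IsQSUB 𝔓 S h) →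
    ∃ g, MemLinf 𝔓 g ∧ IsQSSup 𝔓 S g

/-- `L^∞_𝐜` has the countable sup property. -/
def LinfCountableSup (𝔓 : Set (Measure Ω)) : Prop :=
  ∀ S : Set (Ω → ℝ), (∀ f ∈ S, MemLinf 𝔓 f) →
    ∀ g, MemLinf 𝔓 g → IsQSSup 𝔓 S g →
      ∃ D ⊆ S, D.Countable ∧ IsQSSup 𝔓 D g

/-- indicator function of a set, real valued. -/
noncomputable def indC (A : Set Ω) : Ω → ℝ := A.indicator 1

lemma qsle_iff {Ω : Type*} [MeasurableSpace Ω] {P : Measure Ω} {f g : Ω → ℝ} :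
    QSLe {P} f g ↔ ∀ᵐ ω ∂P, f ω ≤ g ω := by
  constructor
  · intro h
    rw [ae_iff]
    exact h P rfl
  · intro h Q hQ
    rw [Set.mem_singleton_iff] at hQ
    subst hQ
    exact ae_iff.mp h

open scoped ENNReal Topology NNReal

/-- A solid subset of the positive cone of `L⁰_{P*}` is closed with respect to convergence
in probability under `P*` iff it is order closed. -/
theorem closedInProbability_iff_orderClosed
    {Ω : Type*} [MeasurableSpace Ω] (P : Measure Ω) (hP : IsProbabilityMeasure P)
    (𝒞 : Set (Ω → ℝ)) (hne : 𝒞.Nonempty)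
    (hmem : ∀ f ∈ 𝒞, Measurable f ∧ QSLe {P} 0 f)
    (hsolid : ∀ f ∈ 𝒞, ∀ g : Ω → ℝ, Measurable g → QSLe {P} 0 g → QSLe {P} g f → g ∈ 𝒞) :
    (∀ (f : ℕ → Ω → ℝ) (g : Ω → ℝ), (∀ n, f n ∈ 𝒞) → Measurable g →
        MeasureTheory.TendstoInMeasure P f Filter.atTop g → ∃ g' ∈ 𝒞, QSEq {P} g g') ↔
      OrderClosedL0.{u} {P} 𝒞 := by
  have qle : ∀ f g : Ω → ℝ, QSLe {P} f g ↔ ∀ᵐ ω ∂P, f ω ≤ g ω := fun f g => qsle_iff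
  constructor
  · -- closed in probability → order closed
    intro H ι _i1 _i2 _i3 X x hX hx hconv
    obtain ⟨Y, hYm, hYanti, ⟨hYlb, hYglb⟩, hYdom⟩ := hconv
    have hY0 : ∀ α, ∀ᵐ ω ∂P, 0 ≤ Y α ω := by
      intro α
      have := (qle _ _).mp (hYlb (Y α) ⟨α, rfl⟩)
      simpa using this
    set Z : ι → Ω → ℝ := fun α ω => min (max (Y α ω) 0) 1 with hZdef
    have hZm : ∀ α, Measurable (Z α) := fun α =>
      ((hYm α).max measurable_const).min measurable_const
    have hZ0 : ∀ α ω, 0 ≤ Z α ω := fun α ω => le_min (le_max_right _ _) zero_le_one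
    have hZ1 : ∀ α ω, Z α ω ≤ 1 := fun α ω => min_le_right _ _
    have hZanti : ∀ α β, α ≤ β → ∀ᵐ ω ∂P, Z β ω ≤ Z α ω := by
      intro α β hab
      filter_upwards [(qle _ _).mp (hYanti α β hab)] with ω hω
      exact min_le_min (max_le_max hω le_rfl) le_rfl
    have hZY : ∀ α, ∀ᵐ ω ∂P, Z α ω ≤ Y α ω := by
      intro α
      filter_upwards [hY0 α] with ω hω
      calc Z α ω ≤ max (Y α ω) 0 := min_le_left _ _
        _ = Y α ω := max_eq_left hω
    set I : ι → ℝ≥0∞ := fun α => ∫⁻ ω, ENNReal.ofReal (Z α ω) ∂P with hIdef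
    have hIm : ∀ α, Measurable fun ω => ENNReal.ofReal (Z α ω) := fun α =>
      (hZm α).ennreal_ofReal
    have hI1 : ∀ α, I α ≤ 1 := by
      intro α
      calc I α ≤ ∫⁻ _, 1 ∂P := lintegral_mono fun ω => ENNReal.ofReal_le_one.mpr (hZ1 α ω)
        _ = 1 := by simp
    have hImono : ∀ α β, α ≤ β → I β ≤ I α := by
      intro α β hab
      refine lintegral_mono_ae ?_
      filter_upwards [hZanti α β hab] with ω hω using ENNReal.ofReal_le_ofReal hω
    set c : ℝ≥0∞ := ⨅ α, I α with hcdef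
    have hcne : c ≠ ∞ := by
      have hcle : c ≤ 1 := le_trans (iInf_le _ (Classical.arbitrary ι)) (hI1 _)
      exact (lt_of_le_of_lt hcle ENNReal.one_lt_top).ne
    set δ : ℕ → ℝ≥0∞ := fun n => (((n + 1 : ℕ)) : ℝ≥0∞)⁻¹ with hδdef
    have hδpos : ∀ n, δ n ≠ 0 := fun n => by
      simp [hδdef]
    have hlt : ∀ n : ℕ, ∃ α, I α < c + δ n := by
      intro n
      have h1 : c < c + δ n := ENNReal.lt_add_right hcne (hδpos n)
      rw [hcdef] at h1
      exact iInf_lt_iff.mp h1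
    choose a ha using hlt
    choose ub hub1 hub2 using fun p q : ι => exists_ge_ge p q
    set β : ℕ → ι := fun n => Nat.rec (a 0) (fun n ih => ub ih (a (n + 1))) n with hβdef
    have hβmono : Monotone β := monotone_nat_of_le_succ fun n => hub1 _ _
    have hIβ : ∀ n, I (β n) < c + δ n := by
      intro n
      cases n with
      | zero => exact ha 0
      | succ n => exact lt_of_le_of_lt (hImono _ _ (hub2 _ _)) (ha (n + 1))
    set W : Ω → ℝ := fun ω => ⨅ n, Z (β n) ω with hWdef
    have hWbdd : ∀ ω, BddBelow (Set.range fun n => Z (β n) ω) := fun ω =>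
      ⟨0, by rintro t ⟨n, rfl⟩; exact hZ0 _ _⟩
    have hWm : Measurable W := Measurable.iInf fun n => hZm _
    have hW0 : ∀ ω, 0 ≤ W ω := fun ω => le_ciInf fun n => hZ0 _ _
    have hWle : ∀ (n : ℕ) ω, W ω ≤ Z (β n) ω := fun n ω => ciInf_le (hWbdd ω) n
    have hδlim : Tendsto δ atTop (𝓝 0) :=
      ENNReal.tendsto_inv_nat_nhds_zero.comp (tendsto_add_atTop_nat 1)
    have hWlb : ∀ α, ∀ᵐ ω ∂P, W ω ≤ Y α ω := by
      intro α
      set V : Ω → ℝ := fun ω => max (W ω - Z α ω) 0 with hVdef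
      have hVm : Measurable V := (hWm.sub (hZm α)).max measurable_const
      have key : ∀ n : ℕ, ∫⁻ ω, ENNReal.ofReal (V ω) ∂P ≤ δ n := by
        intro n
        obtain ⟨γ, hγ1, hγ2⟩ := exists_ge_ge (β n) α
        set D : Ω → ℝ := fun ω => max (Z (β n) ω - Z γ ω) 0 with hDdef
        have hsplit : I (β n) = I γ + ∫⁻ ω, ENNReal.ofReal (D ω) ∂P := by
          rw [← lintegral_add_left (hIm γ)]
          refine lintegral_congr_ae ?_
          filter_upwards [hZanti _ _ hγ1] with ω hω
          rw [← ENNReal.ofReal_add (hZ0 γ ω) (le_max_right _ _)]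
          congr 1
          rw [max_eq_left (by linarith : (0:ℝ) ≤ Z (β n) ω - Z γ ω)]
          ring
        have hDle : ∫⁻ ω, ENNReal.ofReal (D ω) ∂P ≤ δ n := by
          have h1 : c + ∫⁻ ω, ENNReal.ofReal (D ω) ∂P ≤ c + δ n := by
            calc c + ∫⁻ ω, ENNReal.ofReal (D ω) ∂P
                ≤ I γ + ∫⁻ ω, ENNReal.ofReal (D ω) ∂P :=
                  add_le_add_left (iInf_le _ γ) _
              _ = I (β n) := hsplit.symm
              _ ≤ c + δ n := (hIβ n).le
          exact (ENNReal.add_le_add_iff_left hcne).mp h1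
        refine le_trans (lintegral_mono_ae ?_) hDle
        filter_upwards [hZanti _ _ hγ2] with ω hω
        apply ENNReal.ofReal_le_ofReal
        have h3 : W ω - Z α ω ≤ Z (β n) ω - Z γ ω := by
          have := hWle n ω
          linarith
        exact max_le_max h3 le_rfl
      have hV0 : ∫⁻ ω, ENNReal.ofReal (V ω) ∂P = 0 :=
        le_antisymm (ge_of_tendsto' hδlim key) zero_le
      have hVae := (lintegral_eq_zero_iff hVm.ennreal_ofReal).mp hV0
      filter_upwards [hVae, hZY α] with ω h1 h2
      have h3 : V ω ≤ 0 := by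
        have : ENNReal.ofReal (V ω) = 0 := h1
        simpa [ENNReal.ofReal_eq_zero] using this
      have h4 : W ω - Z α ω ≤ 0 := le_trans (le_max_left _ _) h3
      linarith
    have hWlbQ : IsQSLB {P} (Set.range Y) W := by
      rintro u ⟨α, rfl⟩
      exact (qle _ _).mpr (hWlb α)
    have hW0ae : ∀ᵐ ω ∂P, W ω = 0 := by
      have := (qle _ _).mp (hYglb W hWm hWlbQ)
      filter_upwards [this] with ω hω
      exact le_antisymm hω (hW0 ω)
    have hZmono_ae : ∀ᵐ ω ∂P, ∀ m n : ℕ, m ≤ n → Z (β n) ω ≤ Z (β m) ω := by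
      rw [ae_all_iff]
      intro m
      rw [ae_all_iff]
      intro n
      by_cases hmn : m ≤ n
      · filter_upwards [hZanti _ _ (hβmono hmn)] with ω hω _
        exact hω
      · exact ae_of_all _ fun ω h => absurd h hmn
    have hItend : Tendsto (fun n => I (β n)) atTop (𝓝 0) := by
      have h0 : ∫⁻ ω, ENNReal.ofReal (W ω) ∂P = 0 := by
        rw [lintegral_eq_zero_iff hWm.ennreal_ofReal]
        filter_upwards [hW0ae] with ω hω
        simp [hω]
      rw [← h0]
      refine tendsto_lintegral_of_dominated_convergence (fun _ => 1) (fun n => hIm _)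
        (fun n => ae_of_all _ fun ω => ENNReal.ofReal_le_one.mpr (hZ1 _ ω)) (by simp) ?_
      filter_upwards [hZmono_ae] with ω hω
      have hanti : Antitone fun n => Z (β n) ω := fun m n h => hω m n h
      have htd : Tendsto (fun n => Z (β n) ω) atTop (𝓝 (W ω)) :=
        tendsto_atTop_ciInf hanti (hWbdd ω)
      exact (ENNReal.continuous_ofReal.tendsto _).comp htd
    have htm : MeasureTheory.TendstoInMeasure P (fun n => X (β n)) Filter.atTop x := by
      rw [tendstoInMeasure_iff_dist]
      intro ε hε
      set e : ℝ≥0∞ := ENNReal.ofReal (min ε 1) with hedef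
      have he0 : e ≠ 0 := by
        rw [hedef]
        simp only [ne_eq, ENNReal.ofReal_eq_zero, not_le]
        exact lt_min hε one_pos
      have hene : e ≠ ∞ := ENNReal.ofReal_ne_top
      have hbound : ∀ n, P {ω | ε ≤ dist (X (β n) ω) (x ω)} ≤ e⁻¹ * I (β n) := by
        intro n
        have hsub : {ω | ε ≤ dist (X (β n) ω) (x ω)} ≤ᵐ[P]
            {ω | e ≤ ENNReal.ofReal (Z (β n) ω)} := by
          filter_upwards [(qle _ _).mp (hYdom (β n)), hY0 (β n)] with ω h1 h2
          intro hω
          have hω' : ε ≤ |X (β n) ω - x ω| := by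
            have hω0 : ε ≤ dist (X (β n) ω) (x ω) := hω
            simpa [Real.dist_eq] using hω0
          have h3 : ε ≤ Y (β n) ω := le_trans hω' h1
          have h4 : min ε 1 ≤ Z (β n) ω :=
            le_min (le_trans (min_le_left _ _) (le_trans h3 (le_max_left _ _)))
              (min_le_right _ _)
          exact ENNReal.ofReal_le_ofReal h4
        calc P {ω | ε ≤ dist (X (β n) ω) (x ω)}
            ≤ P {ω | e ≤ ENNReal.ofReal (Z (β n) ω)} := measure_mono_ae hsub
          _ ≤ e⁻¹ * I (β n) := by
              have hmark := mul_meas_ge_le_lintegral₀ (μ := P) ((hIm (β n)).aemeasurable) e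
              have h5 : P {ω | e ≤ ENNReal.ofReal (Z (β n) ω)}
                  = e⁻¹ * (e * P {ω | e ≤ ENNReal.ofReal (Z (β n) ω)}) := by
                rw [← mul_assoc, ENNReal.inv_mul_cancel he0 hene, one_mul]
              rw [h5]
              exact mul_le_mul_right hmark _
      have hlim : Tendsto (fun n => e⁻¹ * I (β n)) atTop (𝓝 0) := by
        have := ENNReal.Tendsto.const_mul (a := e⁻¹) hItend
          (Or.inr (ENNReal.inv_ne_top.mpr he0))
        simpa using this
      exact tendsto_of_tendsto_of_tendsto_of_le_of_le tendsto_const_nhds hlim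
        (fun n => zero_le) hbound
    exact H (fun n => X (β n)) x (fun n => hX (β n)) hx htm
  · -- order closed → closed in probability
    intro H f g hf hg htend
    obtain ⟨ns, hns, hae⟩ := htend.exists_seq_tendsto_ae
    set gp : Ω → ℝ := fun ω => max (g ω) 0 with hgpdef
    have hgpm : Measurable gp := hg.max measurable_const
    have hfm : ∀ n, Measurable (f n) := fun n => (hmem _ (hf n)).1
    set h : ℕ → Ω → ℝ := fun k ω => min (max (f (ns k) ω) 0) (gp ω) with hhdef
    have hhm : ∀ k, Measurable (h k) := fun k =>
      ((hfm _).max measurable_const).min hgpm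
    have hh0 : ∀ k ω, 0 ≤ h k ω := fun k ω =>
      le_min (le_max_right _ _) (le_max_right _ _)
    have hhgp : ∀ k ω, h k ω ≤ gp ω := fun k ω => min_le_right _ _
    have hfnn : ∀ᵐ ω ∂P, ∀ n, 0 ≤ f n ω := by
      rw [ae_all_iff]
      intro n
      have := (qle _ _).mp (hmem _ (hf n)).2
      simpa using this
    have hhC : ∀ k, h k ∈ 𝒞 := by
      intro k
      refine hsolid (f (ns k)) (hf (ns k)) (h k) (hhm k) ?_ ?_
      · refine (qle _ _).mpr (ae_of_all _ fun ω => ?_)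
        simpa using hh0 k ω
      · refine (qle _ _).mpr ?_
        filter_upwards [hfnn] with ω hω
        calc h k ω ≤ max (f (ns k) ω) 0 := min_le_left _ _
          _ = f (ns k) ω := max_eq_left (hω _)
    have hconv' : ∀ᵐ ω ∂P, Tendsto (fun k => h k ω) atTop (𝓝 (gp ω)) ∧ g ω = gp ω := by
      filter_upwards [hae, hfnn] with ω hω hnn
      have hg0 : 0 ≤ g ω := ge_of_tendsto' hω fun i => hnn _
      have hgg : g ω = gp ω := (max_eq_left hg0).symm
      refine ⟨?_, hgg⟩
      have htd : Tendsto (fun k => min (max (f (ns k) ω) 0) (gp ω)) atTop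
          (𝓝 (min (max (g ω) 0) (gp ω))) :=
        (hω.max tendsto_const_nhds).min tendsto_const_nhds
      have heq : min (max (g ω) 0) (gp ω) = gp ω := by
        rw [hgpdef]
        exact min_self _
      rw [heq] at htd
      exact htd
    set Y : ℕ → Ω → ℝ := fun k ω => ⨆ j : ℕ, (gp ω - h (k + j) ω) with hYdef
    have hbdd : ∀ k ω, BddAbove (Set.range fun j : ℕ => gp ω - h (k + j) ω) := by
      intro k ω
      refine ⟨gp ω, ?_⟩
      rintro t ⟨j, rfl⟩
      have := hh0 (k + j) ω
      simp only
      linarith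
    have hYm : ∀ k, Measurable (Y k) := fun k =>
      Measurable.iSup fun j => hgpm.sub (hhm _)
    have hY0 : ∀ k ω, 0 ≤ Y k ω := by
      intro k ω
      have h0 : gp ω - h (k + 0) ω ≤ Y k ω := le_ciSup (hbdd k ω) 0
      have := hhgp (k + 0) ω
      linarith
    have hYanti : ∀ k l : ℕ, k ≤ l → ∀ ω, Y l ω ≤ Y k ω := by
      intro k l hkl ω
      refine ciSup_le fun j => ?_
      have hidx : l + j = k + (l - k + j) := by omega
      rw [hidx]
      exact le_ciSup (hbdd k ω) _
    have hYdom : ∀ k, ∀ᵐ ω ∂P, |h k ω - g ω| ≤ Y k ω := by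
      intro k
      filter_upwards [hconv'] with ω hω
      obtain ⟨-, hgg⟩ := hω
      rw [hgg, abs_of_nonpos (by linarith [hhgp k ω])]
      have h0 : gp ω - h (k + 0) ω ≤ Y k ω := le_ciSup (hbdd k ω) 0
      simpa using h0
    have hYtend : ∀ᵐ ω ∂P, Tendsto (fun k => Y k ω) atTop (𝓝 0) := by
      filter_upwards [hconv'] with ω hω
      obtain ⟨hω, -⟩ := hω
      rw [Metric.tendsto_atTop]
      intro ε hε
      obtain ⟨N, hN⟩ := (Metric.tendsto_atTop.mp hω) (ε / 2) (by linarith)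
      refine ⟨N, fun k hk => ?_⟩
      rw [Real.dist_eq, sub_zero, abs_of_nonneg (hY0 k ω)]
      have hup : Y k ω ≤ ε / 2 := by
        refine ciSup_le fun j => ?_
        have hd := hN (k + j) (le_trans hk (Nat.le_add_right _ _))
        rw [Real.dist_eq] at hd
        have := abs_le.mp hd.le
        linarith [this.1]
      linarith
    haveI : Nonempty (ULift.{u} ℕ) := ⟨⟨0⟩⟩
    haveI : IsDirected (ULift.{u} ℕ) (· ≤ ·) :=
      ⟨fun p q => ⟨⟨max p.down q.down⟩, le_max_left _ _, le_max_right _ _⟩⟩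
    refine H (ULift.{u} ℕ) (fun n => h n.down) g (fun n => hhC n.down) hg ?_
    refine ⟨fun n => Y n.down, fun n => hYm n.down, ?_, ⟨?_, ?_⟩,
      fun n => (qle _ _).mpr (hYdom n.down)⟩
    · intro p q hpq
      exact (qle _ _).mpr (ae_of_all _ fun ω => hYanti p.down q.down hpq ω)
    · rintro u ⟨n, rfl⟩
      exact (qle _ _).mpr (ae_of_all _ fun ω => hY0 n.down ω)
    · intro u hum hulb
      refine (qle _ _).mpr ?_
      have hall : ∀ᵐ ω ∂P, ∀ k : ℕ, u ω ≤ Y k ω := by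
        rw [ae_all_iff]
        intro k
        exact (qle _ _).mp (hulb (fun ω => Y k ω) ⟨⟨k⟩, rfl⟩)
      filter_upwards [hall, hYtend] with ω h1 h2
      exact ge_of_tendsto' h2 h1


end Robust
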